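/- Let G = (V, E) be a finite simple graph with E nonempty and with no isolated vertices, and let x : V → ℝ^d be node features with feature smoothness λ_f = 0, i.e., for every v ∈ V, Σ_{v'∈N_v} (x_v − x_{v'}) = 0. Define the degree-weighted empirical probability measure of contexts μ_C = Σ_{v∈V} (|N_v|/(2|E|)) · δ_{x_v} and of mean-aggregated surroundings μ_S = Σ_{v∈V} (|N_v|/(2|E|)) · δ_{m_v}, where m_v = (1/|N_v|) Σ_{v'∈N_v} x_{v'} and δ_p is the Dirac measure at p ∈ ℝ^d. Then μ_S = μ_C, and consequently the Kullback–Leibler divergence D_KL(μ_S ‖ μ_C) = 0. -/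
import Mathlib


open Finset MeasureTheory
open scoped ENNReal

/-- The Kullback–Leibler divergence `D_KL(μ ‖ ν) = ∫ log (dμ/dν) dμ`. -/
noncomputable def klDiv {α : Type*} [MeasurableSpace α] (μ ν : Measure α) : ℝ :=
  ∫ x, Real.log (μ.rnDeriv ν x).toReal ∂μ

/-- For a finite graph with no isolated vertices and feature smoothness `λ_f = 0`
(i.e., `Σ_{v'∈N_v} (x_v − x_{v'}) = 0` for every node `v`), the degree-weighted
empirical distribution of the mean-aggregated surroundings coincides with that of
the contexts, and hence the Kullback–Leibler divergence between them is zero. -/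
theorem surrounding_eq_context_of_smoothness_zero
    {V : Type*} [Fintype V] [DecidableEq V]
    (G : SimpleGraph V) [DecidableRel G.Adj] (hE : G.edgeFinset.Nonempty)
    (hnoiso : ∀ v : V, (G.neighborFinset v).Nonempty)
    (d : ℕ) (x : V → Fin d → ℝ)
    (hsmooth : ∀ v : V, ∑ v' ∈ G.neighborFinset v, (x v - x v') = 0)
    (μC μS : Measure (Fin d → ℝ))
    (hμC : μC = ∑ v : V,
      ((G.degree v : ℝ≥0∞) / (2 * (G.edgeFinset.card : ℝ≥0∞))) • Measure.dirac (x v))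
    (hμS : μS = ∑ v : V,
      ((G.degree v : ℝ≥0∞) / (2 * (G.edgeFinset.card : ℝ≥0∞))) •
        Measure.dirac ((1 / ((G.degree v : ℝ))) • ∑ v' ∈ G.neighborFinset v, x v')) :
    μS = μC ∧ klDiv μS μC = 0 := by
  have hmean : ∀ v : V,
      (1 / ((G.degree v : ℝ))) • ∑ v' ∈ G.neighborFinset v, x v' = x v := by
    intro v
    have hdeg : ((G.degree v : ℝ)) ≠ 0 := Nat.cast_ne_zero.mpr (hnoiso v).card_pos.ne'
    have h := hsmooth v
    rw [Finset.sum_sub_distrib, Finset.sum_const, sub_eq_zero,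
      SimpleGraph.card_neighborFinset_eq_degree] at h
    rw [← h, ← Nat.cast_smul_eq_nsmul ℝ, smul_smul, one_div, inv_mul_cancel₀ hdeg, one_smul]
  have hSC : μS = μC := by
    rw [hμS, hμC]
    exact Finset.sum_congr rfl fun v _ => by rw [hmean v]
  refine ⟨hSC, ?_⟩
  rw [hSC]
  have hfin : IsFiniteMeasure μC := by
    constructor
    rw [hμC]
    simp only [Measure.finset_sum_apply, Measure.smul_apply, Measure.dirac_apply_of_mem
      (Set.mem_univ _), smul_eq_mul, mul_one]
    refine (ENNReal.sum_lt_top).2 fun v _ => ?_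
    exact ENNReal.div_lt_top (by simp)
      (mul_ne_zero two_ne_zero
        (by exact_mod_cast Nat.cast_ne_zero.mpr (Finset.card_pos.mpr hE).ne'))
  haveI := hfin
  have h1 : μC.rnDeriv μC =ᵐ[μC] 1 := Measure.rnDeriv_self μC
  have hz : ∫ y, Real.log ((μC.rnDeriv μC y).toReal) ∂μC = ∫ _, (0:ℝ) ∂μC :=
    integral_congr_ae (h1.mono fun y hy => by simp [hy])
  unfold klDiv
  rw [hz, integral_zero]
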